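/- If ρ ≥ π, then there exists v ∈ (−π/2, π/2) such that the point S_ρ(u, v) = γ_{u,v}(ρ) is the same for all u ∈ ℝ; in particular the sphere parametrization map (u, v) ↦ S_ρ(u, v) is not injective on (−π, π] × (−π/2, π/2). (This is the 'self-intersection' direction of Proposition 2.3.) -/
import Mathlib


open Real

/-- The geodesic curves of `S² × ℝ` starting at `(1,0,0)` in the Euclidean model,
with longitude `u`, altitude `v` and arc-length parameter `τ` (equation (2.2)). -/
noncomputable def geo (u v τ : ℝ) : EuclideanSpace ℝ (Fin 3) :=
  (WithLp.equiv 2 (Fin 3 → ℝ)).symm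
    ![Real.exp (τ * Real.sin v) * Real.cos (τ * Real.cos v),
      Real.exp (τ * Real.sin v) * Real.sin (τ * Real.cos v) * Real.cos u,
      Real.exp (τ * Real.sin v) * Real.sin (τ * Real.cos v) * Real.sin u]

/-- If `ρ ≥ π` then there is an altitude `v ∈ (−π/2, π/2)` at which the sphere
parametrization `S_ρ(u, v) = γ_{u,v}(ρ)` does not depend on the longitude `u`;
in particular `S_ρ` is not injective on `(−π, π] × (−π/2, π/2)`
(the self-intersection direction of Proposition 2.3). -/
theorem sphere_selfintersection (ρ : ℝ) (hρ : ρ ≥ π) :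
    (∃ v ∈ Set.Ioo (-(π / 2)) (π / 2), ∀ u₁ u₂ : ℝ, geo u₁ v ρ = geo u₂ v ρ) ∧
    ¬ Set.InjOn (fun p : ℝ × ℝ => geo p.1 p.2 ρ)
        (Set.Ioc (-π) π ×ˢ Set.Ioo (-(π / 2)) (π / 2)) := by
  have hπ : (0:ℝ) < π := Real.pi_pos
  have hρ0 : (0:ℝ) < ρ := lt_of_lt_of_le hπ hρ
  set v := Real.arccos (π / ρ) with hv
  have hx0 : 0 < π / ρ := div_pos hπ hρ0
  have hx1 : π / ρ ≤ 1 := (div_le_one hρ0).2 hρ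
  have hcos : Real.cos v = π / ρ := Real.cos_arccos (by linarith) hx1
  have hρcos : ρ * Real.cos v = π := by
    rw [hcos]; field_simp
  have hsin0 : Real.sin (ρ * Real.cos v) = 0 := by rw [hρcos]; exact Real.sin_pi
  have hvmem : v ∈ Set.Ioo (-(π / 2)) (π / 2) := by
    constructor
    · have := Real.arccos_nonneg (π / ρ); linarith
    · exact Real.arccos_lt_pi_div_two.2 hx0
  have hkey : ∀ u₁ u₂ : ℝ, geo u₁ v ρ = geo u₂ v ρ := by
    intro u₁ u₂
    unfold geo
    congr 1
    funext i
    fin_cases i <;> simp [hsin0]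
  refine ⟨⟨v, hvmem, hkey⟩, ?_⟩
  intro h
  have h01 : ((0:ℝ), v) ∈ Set.Ioc (-π) π ×ˢ Set.Ioo (-(π / 2)) (π / 2) := by
    exact ⟨⟨show -π < 0 by linarith, show (0:ℝ) ≤ π by linarith⟩, hvmem⟩
  have h02 : ((π:ℝ), v) ∈ Set.Ioc (-π) π ×ˢ Set.Ioo (-(π / 2)) (π / 2) := by
    exact ⟨⟨show -π < π by linarith, le_refl π⟩, hvmem⟩
  have := h h01 h02 (hkey 0 π)
  have : (0:ℝ) = π := congrArg Prod.fst this
  linarith
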